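/- Let L ≥ 1 be a natural number, let p assign to every binary string ε of length |ε| ≤ L a number p_ε ∈ [0,1) with p_ε = 0 whenever |ε| = L, and let ν assign to every binary string ε of length |ε| < L a number ν_ε > 0. Then there exists a unique function q assigning to every binary string ε of length |ε| ≤ L a number q_ε ∈ [0,1), with q_ε = 0 whenever |ε| = L, such that for every string ε with |ε| < L: (q_ε/(1 − q_ε)) * (1 − q_{ε0}) * (1 − q_{ε1}) = (p_ε/(1 − p_ε)) * (1 − p_{ε0}) * (1 − p_{ε1}) * ν_ε. -/

import Mathlib

/-- Auxiliary recursion: value of `q` with fuel `n` (distance to the leaves). -/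
noncomputable def stmt17qA (c : List Bool → ℝ) : ℕ → List Bool → ℝ
  | 0, _ => 0
  | n+1, ε =>
    let t := c ε / ((1 - stmt17qA c n (ε ++ [false])) * (1 - stmt17qA c n (ε ++ [true])))
    t / (1 + t)

lemma stmt17qA_mem (c : List Bool → ℝ) (L : ℕ)
    (hc : ∀ ε : List Bool, ε.length < L → 0 ≤ c ε) :
    ∀ n, ∀ ε : List Bool, ε.length + n ≤ L → stmt17qA c n ε ∈ Set.Ico (0 : ℝ) 1 := by
  intro n
  induction n with
  | zero => intro ε _; simp [stmt17qA]
  | succ n ih =>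
    intro ε hε
    have h0 := ih (ε ++ [false]) (by simpa using by omega)
    have h1 := ih (ε ++ [true]) (by simpa using by omega)
    have hD : 0 < (1 - stmt17qA c n (ε ++ [false])) * (1 - stmt17qA c n (ε ++ [true])) := by
      have := h0.2; have := h1.2
      nlinarith [h0.2, h1.2]
    have hcε : 0 ≤ c ε := hc ε (by omega)
    set t := c ε / ((1 - stmt17qA c n (ε ++ [false])) * (1 - stmt17qA c n (ε ++ [true]))) with ht
    have htn : 0 ≤ t := div_nonneg hcε hD.le
    have h1t : 0 < 1 + t := by linarith
    have hval : stmt17qA c (n+1) ε = t / (1 + t) := by simp only [stmt17qA]; rfl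
    rw [hval]
    constructor
    · exact div_nonneg htn h1t.le
    · rw [div_lt_one h1t]; linarith

lemma stmt17div_inj {x y t : ℝ} (hx : x ∈ Set.Ico (0 : ℝ) 1) (hy : y ∈ Set.Ico (0 : ℝ) 1)
    (hxt : x / (1 - x) = t) (hyt : y / (1 - y) = t) : x = y := by
  have hx1 : (1 : ℝ) - x ≠ 0 := by have := hx.2; intro h; linarith
  have hy1 : (1 : ℝ) - y ≠ 0 := by have := hy.2; intro h; linarith
  have : x / (1 - x) = y / (1 - y) := hxt.trans hyt.symm
  rw [div_eq_div_iff hx1 hy1] at this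
  nlinarith [this]

/-- Let `L ≥ 1`, let `p_ε ∈ [0,1)` for binary strings `|ε| ≤ L` with
`p_ε = 0` when `|ε| = L`, and let `ν_ε > 0` for `|ε| < L`. Then there is a unique assignment
`q` of values `q_ε ∈ [0,1)` to strings `|ε| ≤ L`, with `q_ε = 0` when `|ε| = L`, such that
for every `|ε| < L`:
`(q_ε/(1-q_ε))(1-q_{ε0})(1-q_{ε1}) = (p_ε/(1-p_ε))(1-p_{ε0})(1-p_{ε1}) ν_ε`.
(Binary strings are lists of booleans; `ε0 = ε ++ [false]`, `ε1 = ε ++ [true]`; uniqueness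
is uniqueness of the values on strings of length at most `L`.) -/
theorem stmt_17 (L : ℕ) (hL : 1 ≤ L) (p ν : List Bool → ℝ)
    (hp : ∀ ε : List Bool, ε.length ≤ L → p ε ∈ Set.Ico (0 : ℝ) 1)
    (hpL : ∀ ε : List Bool, ε.length = L → p ε = 0)
    (hν : ∀ ε : List Bool, ε.length < L → 0 < ν ε) :
    ∃ q : List Bool → ℝ,
      ((∀ ε : List Bool, ε.length ≤ L → q ε ∈ Set.Ico (0 : ℝ) 1) ∧
        (∀ ε : List Bool, ε.length = L → q ε = 0) ∧
        (∀ ε : List Bool, ε.length < L →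
          q ε / (1 - q ε) * (1 - q (ε ++ [false])) * (1 - q (ε ++ [true])) =
            p ε / (1 - p ε) * (1 - p (ε ++ [false])) * (1 - p (ε ++ [true])) * ν ε)) ∧
      ∀ q' : List Bool → ℝ,
        ((∀ ε : List Bool, ε.length ≤ L → q' ε ∈ Set.Ico (0 : ℝ) 1) ∧
          (∀ ε : List Bool, ε.length = L → q' ε = 0) ∧
          (∀ ε : List Bool, ε.length < L →
            q' ε / (1 - q' ε) * (1 - q' (ε ++ [false])) * (1 - q' (ε ++ [true])) =
              p ε / (1 - p ε) * (1 - p (ε ++ [false])) * (1 - p (ε ++ [true])) * ν ε)) →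
        ∀ ε : List Bool, ε.length ≤ L → q' ε = q ε := by
  classical
  set c : List Bool → ℝ := fun ε =>
    p ε / (1 - p ε) * (1 - p (ε ++ [false])) * (1 - p (ε ++ [true])) * ν ε with hc_def
  have hc : ∀ ε : List Bool, ε.length < L → 0 ≤ c ε := by
    intro ε hε
    have hpε := hp ε hε.le
    have hp0 := hp (ε ++ [false]) (by simpa using hε)
    have hp1 := hp (ε ++ [true]) (by simpa using hε)
    have h1 : 0 ≤ p ε / (1 - p ε) := div_nonneg hpε.1 (by have := hpε.2; linarith)
    have h2 : (0:ℝ) ≤ 1 - p (ε ++ [false]) := by have := hp0.2; linarith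
    have h3 : (0:ℝ) ≤ 1 - p (ε ++ [true]) := by have := hp1.2; linarith
    have := (hν ε hε).le
    positivity
  set q : List Bool → ℝ := fun ε => stmt17qA c (L - ε.length) ε with hq_def
  have hqmem : ∀ ε : List Bool, ε.length ≤ L → q ε ∈ Set.Ico (0 : ℝ) 1 := by
    intro ε hε
    exact stmt17qA_mem c L hc (L - ε.length) ε (by omega)
  have hqL : ∀ ε : List Bool, ε.length = L → q ε = 0 := by
    intro ε hε
    simp only [hq_def, hε, Nat.sub_self, stmt17qA]
  have key : ∀ ε : List Bool, ε.length < L →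
      q ε / (1 - q ε) * (1 - q (ε ++ [false])) * (1 - q (ε ++ [true])) = c ε := by
    intro ε hε
    set n := L - (ε.length + 1) with hn
    have hLn : L - ε.length = n + 1 := by omega
    have hq0 : q (ε ++ [false]) = stmt17qA c n (ε ++ [false]) := by
      simp only [hq_def, List.length_append, List.length_cons, List.length_nil, hn]
    have hq1 : q (ε ++ [true]) = stmt17qA c n (ε ++ [true]) := by
      simp only [hq_def, List.length_append, List.length_cons, List.length_nil, hn]
    have h0 := stmt17qA_mem c L hc n (ε ++ [false]) (by simp; omega)
    have h1 := stmt17qA_mem c L hc n (ε ++ [true]) (by simp; omega)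
    have hD : 0 < (1 - stmt17qA c n (ε ++ [false])) * (1 - stmt17qA c n (ε ++ [true])) := by
      nlinarith [h0.2, h1.2]
    set t := c ε / ((1 - stmt17qA c n (ε ++ [false])) * (1 - stmt17qA c n (ε ++ [true]))) with ht
    have hqε : q ε = t / (1 + t) := by
      simp only [hq_def, hLn, stmt17qA]; rfl
    have htn : 0 ≤ t := div_nonneg (hc ε hε) hD.le
    have h1t : (0:ℝ) < 1 + t := by linarith
    have hfrac : q ε / (1 - q ε) = t := by
      rw [hqε]
      have : 1 - t / (1 + t) = 1 / (1 + t) := by field_simp; ring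
      rw [this]
      field_simp
    rw [hfrac, hq0, hq1, ht]
    rw [mul_assoc, div_mul_cancel₀ _ hD.ne']
  refine ⟨q, ⟨hqmem, hqL, fun ε hε => key ε hε⟩, ?_⟩
  rintro q' ⟨hq'mem, hq'L, hq'eq⟩
  -- uniqueness by induction on L - ε.length
  suffices H : ∀ n, ∀ ε : List Bool, ε.length + n = L → q' ε = q ε by
    intro ε hε
    exact H (L - ε.length) ε (by omega)
  intro n
  induction n with
  | zero =>
    intro ε hε
    rw [hq'L ε (by omega), hqL ε (by omega)]
  | succ n ih =>
    intro ε hε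
    have hεL : ε.length < L := by omega
    have h0 : q' (ε ++ [false]) = q (ε ++ [false]) := ih _ (by simp; omega)
    have h1 : q' (ε ++ [true]) = q (ε ++ [true]) := ih _ (by simp; omega)
    have hm0 := hqmem (ε ++ [false]) (by simp; omega)
    have hm1 := hqmem (ε ++ [true]) (by simp; omega)
    have hD : 0 < (1 - q (ε ++ [false])) * (1 - q (ε ++ [true])) := by
      nlinarith [hm0.2, hm1.2]
    have e1 := key ε hεL
    have e2 := hq'eq ε hεL
    rw [h0, h1] at e2
    have e2 : q' ε / (1 - q' ε) * (1 - q (ε ++ [false])) * (1 - q (ε ++ [true])) = c ε := e2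
    have heq : q' ε / (1 - q' ε) * ((1 - q (ε ++ [false])) * (1 - q (ε ++ [true]))) =
        q ε / (1 - q ε) * ((1 - q (ε ++ [false])) * (1 - q (ε ++ [true]))) := by
      rw [← mul_assoc, ← mul_assoc, e2, e1]
    have hfrac : q' ε / (1 - q' ε) = q ε / (1 - q ε) :=
      mul_right_cancel₀ hD.ne' heq
    exact stmt17div_inj (hq'mem ε hεL.le) (hqmem ε hεL.le) hfrac rfl
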